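/- Let N be a consecutive subset of Ω and M ⊆ Ω nonempty. If there exists a consecutive set M′ ⊇ M with |M′| < |M| + |N|, then the constacyclic code with zero set MN = (1/α)⋃_{ε∈M} εN has minimum distance at least |M| + |N|. -/

import Mathlib

open Matrix Module Submodule

private lemma vdm_isUnit {K : Type*} [Field K] {k : ℕ} (v : Fin k → K)
    (hv : Function.Injective v) : IsUnit (Matrix.vandermonde v).det := by
  rw [isUnit_iff_ne_zero, Matrix.det_vandermonde]
  refine Finset.prod_ne_zero_iff.mpr fun i _ => Finset.prod_ne_zero_iff.mpr fun j hj => ?_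
  exact sub_ne_zero_of_ne (fun h => (Finset.mem_Ioi.mp hj).ne' (hv h))

private lemma vdm_isUnit' {K : Type*} [Field K] {k : ℕ} (v : Fin k → K)
    (hv : Function.Injective v) :
    IsUnit (Matrix.det fun t j : Fin k => v j ^ (t : ℕ)) := by
  have : (fun t j : Fin k => v j ^ (t : ℕ)) = (Matrix.vandermonde v)ᵀ := rfl
  rw [this, Matrix.det_transpose]
  exact vdm_isUnit v hv

private lemma roos_core {K : Type*} [Field K] {ι : Type*} [Fintype ι] [DecidableEq ι]
    [Nonempty ι] [DecidableEq K]
    (x y u : ι → K) (hx : Function.Injective x) (hy : Function.Injective y)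
    (hu : ∀ i, u i ≠ 0) (hyne : ∀ i, y i ≠ 0)
    (p q : ℕ) (Z : Finset ℕ) (hZq : ∀ z ∈ Z, z < q) (hZne : Z.Nonempty)
    (hqs : q < Z.card + p)
    (hcons : ∀ z ∈ Z, ∀ t < p, ∑ i, u i * y i ^ z * x i ^ t = 0) :
    Z.card + p ≤ Fintype.card ι := by
  classical
  set w := Fintype.card ι with hw
  let κ : Fin w ≃ ι := (Fintype.equivFin ι).symm
  set H : ℕ → ι → K := fun z i => u i * y i ^ z with hH
  set A : Matrix (Fin p) ι K := fun t i => x i ^ (t : ℕ) with hA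
  have hker : ∀ z ∈ Z, H z ∈ LinearMap.ker A.mulVecLin := by
    intro z hz
    rw [LinearMap.mem_ker]
    funext t
    have h0 := hcons z hz t t.2
    rw [Matrix.mulVecLin_apply]
    show ∑ i, A t i * H z i = 0
    rw [← h0]
    exact Finset.sum_congr rfl fun i _ => by simp only [hA, hH]; ring
  -- Step 1 : p < w
  have hpw : p < w := by
    by_contra hc
    push_neg at hc
    obtain ⟨z0, hz0⟩ := hZne
    set B : Matrix (Fin w) (Fin w) K := fun t j => x (κ j) ^ (t : ℕ) with hB
    have hBdet : IsUnit B.det := vdm_isUnit' (x ∘ κ) (hx.comp κ.injective)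
    have hBinj : Function.Injective B.mulVec :=
      (Matrix.mulVec_injective_iff_isUnit (A := B)).mpr ((Matrix.isUnit_iff_isUnit_det B).mpr hBdet)
    have hBz : B.mulVec (fun j => H z0 (κ j)) = B.mulVec 0 := by
      rw [Matrix.mulVec_zero]
      funext t
      have h0 := hcons z0 hz0 t (lt_of_lt_of_le t.2 hc)
      have hsum := Equiv.sum_comp κ (fun i => u i * y i ^ z0 * x i ^ (t : ℕ))
      rw [h0] at hsum
      show ∑ j, B t j * H z0 (κ j) = 0
      rw [← hsum]
      exact Finset.sum_congr rfl fun j _ => by simp only [hB, hH]; ring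
    have hv0 := hBinj hBz
    have h1 : H z0 (κ (κ.symm (Classical.arbitrary ι))) = 0 := by
      have := congrFun hv0 (κ.symm (Classical.arbitrary ι))
      simpa using this
    rw [Equiv.apply_symm_apply] at h1
    simp only [hH] at h1
    exact (mul_ne_zero (hu _) (pow_ne_zero _ (hyne _))) h1
  -- Step 2 : surjectivity
  have hsurj : Function.Surjective A.mulVecLin := by
    intro u0
    let emb : Fin p → ι := fun s => κ (Fin.castLE hpw.le s)
    have hembinj : Function.Injective emb :=
      κ.injective.comp (Fin.castLE_injective _)
    set Bp : Matrix (Fin p) (Fin p) K := fun t s => x (emb s) ^ (t : ℕ) with hBp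
    have hBpdet : IsUnit Bp.det := vdm_isUnit' (x ∘ emb) (hx.comp hembinj)
    set E : Matrix ι (Fin p) K := fun i s => if emb s = i then 1 else 0 with hE
    have hAE : A * E = Bp := by
      funext t s
      rw [Matrix.mul_apply]
      simp only [Matrix.mul_apply, hE, hA, hBp, mul_ite, mul_one, mul_zero]
      rw [Finset.sum_ite_eq Finset.univ (emb s) (fun i => x i ^ (t : ℕ))]
      simp
    refine ⟨E.mulVec (Bp⁻¹.mulVec u0), ?_⟩
    rw [Matrix.mulVecLin_apply, Matrix.mulVec_mulVec, hAE, Matrix.mulVec_mulVec,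
      Matrix.mul_nonsing_inv _ hBpdet, Matrix.one_mulVec]
  have hrange : finrank K (LinearMap.range A.mulVecLin) = p := by
    rw [LinearMap.range_eq_top.mpr hsurj]
    simp [Module.finrank_fintype_fun_eq_card]
  have hrn := LinearMap.finrank_range_add_finrank_ker A.mulVecLin
  rw [hrange, Module.finrank_fintype_fun_eq_card, ← hw] at hrn
  -- spans
  set ZH : Finset (ι → K) := Z.image H with hZH
  set RH : Finset (ι → K) := ((Finset.range q) \ Z).image H with hRH
  have h1 : finrank K (span K (ZH : Set (ι → K))) ≤ w - p := by
    have hle : span K (ZH : Set (ι → K)) ≤ LinearMap.ker A.mulVecLin := by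
      rw [Submodule.span_le]
      intro v hv
      obtain ⟨z, hz, rfl⟩ := Finset.mem_image.mp (by exact_mod_cast hv)
      exact hker z hz
    have := Submodule.finrank_mono hle
    omega
  have h2 : finrank K (span K (RH : Set (ι → K))) ≤ q - Z.card := by
    have h5 := finrank_span_finset_le_card (R := K) RH
    have hcard2 : RH.card ≤ q - Z.card := by
      refine le_trans (Finset.card_image_le) ?_
      rw [Finset.card_sdiff, Finset.inter_eq_left.mpr (fun z hz => Finset.mem_range.mpr (hZq z hz))]
      simp
    exact le_trans h5 hcard2
  have h3 : finrank K (span K ((ZH ∪ RH : Finset (ι → K)) : Set (ι → K)))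
      ≤ (w - p) + (q - Z.card) := by
    rw [Finset.coe_union, Submodule.span_union]
    exact le_trans (Submodule.finrank_add_le_finrank_add_finrank _ _)
      (Nat.add_le_add h1 h2)
  -- lower bound
  set r := min q w with hr
  have h4 : r ≤ finrank K (span K ((ZH ∪ RH : Finset (ι → K)) : Set (ι → K))) := by
    have hJind : LinearIndependent K (fun t : Fin r => H (t : ℕ)) := by
      rw [Fintype.linearIndependent_iff]
      intro b hb
      have hbi : ∀ i, ∑ t : Fin r, b t * y i ^ (t : ℕ) = 0 := by
        intro i
        have hbc := congrFun hb i
        simp only [Finset.sum_apply, Pi.smul_apply, Pi.zero_apply, smul_eq_mul, hH] at hbc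
        have h5 : u i * ∑ t : Fin r, b t * y i ^ (t : ℕ) = 0 := by
          rw [Finset.mul_sum, ← hbc]
          exact Finset.sum_congr rfl fun t _ => by ring
        exact (mul_eq_zero.mp h5).resolve_left (hu i)
      let emb2 : Fin r → ι := fun s => κ (Fin.castLE (min_le_right q w) s)
      have hemb2inj : Function.Injective emb2 :=
        κ.injective.comp (Fin.castLE_injective _)
      have hBrdet : IsUnit (Matrix.vandermonde (y ∘ emb2)).det :=
        vdm_isUnit _ (hy.comp hemb2inj)
      have hBrinj := (Matrix.mulVec_injective_iff_isUnit
        (A := Matrix.vandermonde (y ∘ emb2))).mpr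
        ((Matrix.isUnit_iff_isUnit_det _).mpr hBrdet)
      have hbv : (Matrix.vandermonde (y ∘ emb2)).mulVec b
          = (Matrix.vandermonde (y ∘ emb2)).mulVec 0 := by
        rw [Matrix.mulVec_zero]
        funext s
        show ∑ t : Fin r, (y ∘ emb2) s ^ ((t : Fin r) : ℕ) * b t = 0
        rw [← hbi (emb2 s)]
        exact Finset.sum_congr rfl fun t _ => by
          simp only [Function.comp_apply]; ring
      intro t
      have hb0 := hBrinj hbv
      simpa using congrFun hb0 t
    have hJmem : Set.range (fun t : Fin r => H (t : ℕ))
        ⊆ ((ZH ∪ RH : Finset (ι → K)) : Set (ι → K)) := by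
      rintro _ ⟨t, rfl⟩
      have ht : (t : ℕ) < q := lt_of_lt_of_le t.2 (min_le_left q w)
      have hmem2 : H (t : ℕ) ∈ ZH ∪ RH := by
        by_cases hmem : (t : ℕ) ∈ Z
        · exact Finset.mem_union_left _ (Finset.mem_image_of_mem H hmem)
        · exact Finset.mem_union_right _ (Finset.mem_image_of_mem H
            (Finset.mem_sdiff.mpr ⟨Finset.mem_range.mpr ht, hmem⟩))
      exact_mod_cast hmem2
    have heq : finrank K (span K (Set.range (fun t : Fin r => H (t : ℕ)))) = r := by
      rw [finrank_span_eq_card hJind, Fintype.card_fin]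
    rw [← heq]
    exact Submodule.finrank_mono (Submodule.span_le.mpr
      (le_trans hJmem Submodule.subset_span))
  have hZcard_le : Z.card ≤ q := by
    have hsub : Z ⊆ Finset.range q := fun z hz => Finset.mem_range.mpr (hZq z hz)
    simpa using Finset.card_le_card hsub
  rcases le_total q w with hqw | hwq
  · have hrq : r = q := min_eq_left hqw
    omega
  · have hrw : r = w := min_eq_right hwq
    omega

/-- Roos bound for constacyclic codes, case of a consecutive set `N`. -/
theorem stmt9 {K : Type*} [Field K] [DecidableEq K] (m : ℕ) (hm : 0 < m)
    (lam : K) (hlam : lam ≠ 0) (α ξ : K) (hξ : IsPrimitiveRoot ξ m)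
    (hα : α ^ m = lam) (hα0 : α ≠ 0)
    (M N M' : Finset K)
    (hMΩ : ∀ x ∈ M, x ^ m = lam) (hNΩ : ∀ x ∈ N, x ^ m = lam)
    (hMne : M.Nonempty) (hNne : N.Nonempty)
    (hNcons : ∃ e n δ : ℕ, 2 ≤ δ ∧ 0 < n ∧ Nat.Coprime m n ∧
      (N : Set K) = {x | ∃ z ≤ δ - 2, x = α * ξ ^ (e + z * n)})
    (hM'cons : ∃ e n δ : ℕ, 2 ≤ δ ∧ 0 < n ∧ Nat.Coprime m n ∧
      (M' : Set K) = {x | ∃ z ≤ δ - 2, x = α * ξ ^ (e + z * n)})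
    (hMM' : M ⊆ M') (hcard : M'.card < M.card + N.card) :
    ∀ c : Fin m → K,
      (∀ γ : K, (∃ ε ∈ M, ∃ ν ∈ N, γ = α⁻¹ * (ε * ν)) →
        ∑ i : Fin m, c i * γ ^ (i : ℕ) = 0) →
      c ≠ 0 → M.card + N.card ≤ hammingNorm c := by
  classical
  intro c hzero hc0
  obtain ⟨e, n, δ, hδ2, hn, hcop, hNset⟩ := hNcons
  obtain ⟨e', n', δ', hδ2', hn', hcop', hM'set⟩ := hM'cons
  have hξ0 : ξ ≠ 0 := hξ.ne_zero hm.ne'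
  have hxprim : IsPrimitiveRoot (ξ ^ n) m := hξ.pow_of_coprime n hcop.symm
  have hyprim : IsPrimitiveRoot (ξ ^ n') m := hξ.pow_of_coprime n' hcop'.symm
  -- support
  set S : Finset (Fin m) := Finset.univ.filter (fun i => c i ≠ 0) with hS
  have hSmem : ∀ i : Fin m, i ∈ S ↔ c i ≠ 0 := by
    intro i; simp [hS]
  have hSne : S.Nonempty := by
    obtain ⟨i, hi⟩ := Function.ne_iff.mp hc0
    exact ⟨i, (hSmem i).mpr hi⟩
  haveI : Nonempty ↥S := Finset.nonempty_coe_sort.mpr hSne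
  have hnorm : hammingNorm c = S.card := rfl
  -- the vectors
  set x : ↥S → K := fun i => (ξ ^ n) ^ ((i : Fin m) : ℕ) with hxdef
  set y : ↥S → K := fun i => (ξ ^ n') ^ ((i : Fin m) : ℕ) with hydef
  set u : ↥S → K := fun i => c i * (α * ξ ^ (e + e')) ^ ((i : Fin m) : ℕ) with hudef
  have hx : Function.Injective x := by
    intro i j h
    exact Subtype.ext (Fin.ext (hxprim.pow_inj (i : Fin m).isLt (j : Fin m).isLt h))
  have hy : Function.Injective y := by
    intro i j h
    exact Subtype.ext (Fin.ext (hyprim.pow_inj (i : Fin m).isLt (j : Fin m).isLt h))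
  have hu : ∀ i, u i ≠ 0 := fun i =>
    mul_ne_zero ((hSmem _).mp i.2) (pow_ne_zero _ (mul_ne_zero hα0 (pow_ne_zero _ hξ0)))
  have hyne : ∀ i, y i ≠ 0 := fun i => pow_ne_zero _ (pow_ne_zero _ hξ0)
  -- N side
  have hpδ : N.card ≤ δ - 1 := by
    have hsub : N ⊆ (Finset.range (δ - 1)).image (fun z => α * ξ ^ (e + z * n)) := by
      intro ν hν
      have hν' : ν ∈ (N : Set K) := hν
      rw [hNset] at hν'
      obtain ⟨z, hz, rfl⟩ := hν'
      exact Finset.mem_image.mpr ⟨z, Finset.mem_range.mpr (by omega), rfl⟩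
    calc N.card ≤ _ := Finset.card_le_card hsub
      _ ≤ (Finset.range (δ - 1)).card := Finset.card_image_le
      _ = δ - 1 := Finset.card_range _
  have hNmem : ∀ t < N.card, α * ξ ^ (e + t * n) ∈ N := by
    intro t ht
    have : α * ξ ^ (e + t * n) ∈ (N : Set K) := by
      rw [hNset]; exact ⟨t, by omega, rfl⟩
    exact_mod_cast this
  -- M' side
  have hpow_mod : ∀ z : ℕ, (ξ ^ n') ^ z = (ξ ^ n') ^ (z % m) := by
    intro z
    conv_lhs => rw [← Nat.div_add_mod z m]
    rw [pow_add, pow_mul, hyprim.pow_eq_one, one_pow, one_mul]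
  have key : ∀ z : ℕ, α * ξ ^ (e' + z * n') = α * ξ ^ e' * (ξ ^ n') ^ z := by
    intro z
    rw [pow_add, mul_comm z n', pow_mul, mul_assoc]
  have hps_mod : ∀ z : ℕ, α * ξ ^ (e' + z * n') = α * ξ ^ (e' + (z % m) * n') := by
    intro z
    rw [key, key, hpow_mod]
  have hps_inj : ∀ z1 < m, ∀ z2 < m,
      α * ξ ^ (e' + z1 * n') = α * ξ ^ (e' + z2 * n') → z1 = z2 := by
    intro z1 h1 z2 h2 heq
    rw [key, key] at heq
    have heq2 : (ξ ^ n') ^ z1 = (ξ ^ n') ^ z2 :=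
      mul_left_cancel₀ (mul_ne_zero hα0 (pow_ne_zero _ hξ0)) heq
    exact hyprim.pow_inj h1 h2 heq2
  have hM'rep : ∀ ε ∈ M', ∃ z, z ≤ δ' - 2 ∧ ε = α * ξ ^ (e' + z * n') := by
    intro ε hε
    have hε' : ε ∈ (M' : Set K) := hε
    rw [hM'set] at hε'
    exact hε'
  set zbar : K → ℕ := fun ε =>
    if h : ∃ z, z ≤ δ' - 2 ∧ ε = α * ξ ^ (e' + z * n') then h.choose % m else 0 with hzbardef
  have hzbar : ∀ ε ∈ M', zbar ε < m ∧ zbar ε ≤ δ' - 2 ∧ ε = α * ξ ^ (e' + zbar ε * n') := by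
    intro ε hε
    have h := hM'rep ε hε
    have hspec := h.choose_spec
    simp only [hzbardef, dif_pos h]
    exact ⟨Nat.mod_lt _ hm, le_trans (Nat.mod_le _ _) hspec.1,
      hspec.2.trans (hps_mod _)⟩
  have hzbar_inj : Set.InjOn zbar (M' : Set K) := by
    intro ε1 h1 ε2 h2 heq
    obtain ⟨ha1, _, hb1⟩ := hzbar ε1 h1
    obtain ⟨ha2, _, hb2⟩ := hzbar ε2 h2
    rw [hb1, hb2, heq]
  have himg : M'.image zbar = Finset.range (min (δ' - 1) m) := by
    ext t
    simp only [Finset.mem_image, Finset.mem_range, lt_min_iff]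
    constructor
    · rintro ⟨ε, hε, rfl⟩
      obtain ⟨ha, hb, _⟩ := hzbar ε hε
      exact ⟨by omega, ha⟩
    · rintro ⟨ht1, ht2⟩
      have htm : α * ξ ^ (e' + t * n') ∈ M' := by
        have h6 : α * ξ ^ (e' + t * n') ∈ (M' : Set K) := by
          rw [hM'set]; exact ⟨t, by omega, rfl⟩
        exact_mod_cast h6
      refine ⟨α * ξ ^ (e' + t * n'), htm, ?_⟩
      obtain ⟨ha, _, hb⟩ := hzbar _ htm
      exact hps_inj _ ha _ ht2 hb.symm
  have hq : M'.card = min (δ' - 1) m := by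
    rw [← Finset.card_image_of_injOn hzbar_inj, himg, Finset.card_range]
  set Z : Finset ℕ := M.image zbar with hZdef
  have hZcard : Z.card = M.card :=
    Finset.card_image_of_injOn (hzbar_inj.mono (by exact_mod_cast hMM'))
  have hZq : ∀ z ∈ Z, z < M'.card := by
    intro z hz
    have h7 : z ∈ M'.image zbar := Finset.image_subset_image hMM' hz
    rw [himg, Finset.mem_range] at h7
    omega
  have hZne : Z.Nonempty := hMne.image _
  -- the constraints
  have hcons : ∀ z ∈ Z, ∀ t < N.card, ∑ i : ↥S, u i * y i ^ z * x i ^ t = 0 := by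
    intro z hz t ht
    obtain ⟨ε, hεM, rfl⟩ := Finset.mem_image.mp hz
    obtain ⟨_, _, hεps⟩ := hzbar ε (hMM' hεM)
    have hγ := hzero (α⁻¹ * (ε * (α * ξ ^ (e + t * n))))
      ⟨ε, hεM, α * ξ ^ (e + t * n), hNmem t ht, rfl⟩
    have hγval : α⁻¹ * (ε * (α * ξ ^ (e + t * n)))
        = α * ξ ^ (e + e' + zbar ε * n' + t * n) := by
      have h8 : α⁻¹ * ((α * ξ ^ (e' + zbar ε * n')) * (α * ξ ^ (e + t * n)))
          = α * (ξ ^ (e' + zbar ε * n') * ξ ^ (e + t * n)) := by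
        field_simp
      have h9 : (e' + zbar ε * n') + (e + t * n) = e + e' + zbar ε * n' + t * n := by
        ring
      conv_lhs => rw [hεps]
      rw [h8, ← pow_add, h9]
    rw [hγval] at hγ
    have hterm : ∀ i : Fin m, c i * (α * ξ ^ (e + e' + zbar ε * n' + t * n)) ^ (i : ℕ)
        = c i * (α * ξ ^ (e + e')) ^ (i : ℕ) * ((ξ ^ n') ^ (i : ℕ)) ^ zbar ε
          * ((ξ ^ n) ^ (i : ℕ)) ^ t := by
      intro i
      simp only [mul_pow, ← pow_mul, ← pow_add]
      have h9 : (e + e' + zbar ε * n' + t * n) * (i : ℕ)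
          = (e + e') * (i : ℕ) + (n' * (i : ℕ) * zbar ε + n * (i : ℕ) * t) := by
        ring
      rw [h9, pow_add]
      ring
    have hsum1 : ∑ i : ↥S, u i * y i ^ zbar ε * x i ^ t
        = ∑ i ∈ S, c i * (α * ξ ^ (e + e' + zbar ε * n' + t * n)) ^ (i : ℕ) := by
      rw [← Finset.sum_coe_sort S
        (fun j => c j * (α * ξ ^ (e + e' + zbar ε * n' + t * n)) ^ (j : ℕ))]
      refine Finset.sum_congr rfl fun i _ => ?_
      simp only [hudef, hxdef, hydef]
      exact (hterm (i : Fin m)).symm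
    have hsum2 : ∑ i ∈ S, c i * (α * ξ ^ (e + e' + zbar ε * n' + t * n)) ^ (i : ℕ)
        = ∑ i : Fin m, c i * (α * ξ ^ (e + e' + zbar ε * n' + t * n)) ^ (i : ℕ) := by
      apply Finset.sum_subset (Finset.subset_univ S)
      intro i _ hi
      have hci : c i = 0 := by
        by_contra h
        exact hi ((hSmem i).mpr h)
      rw [hci, zero_mul]
    rw [hsum1, hsum2, hγ]
  have hqs : M'.card < Z.card + N.card := by rw [hZcard]; exact hcard
  have hcore := roos_core x y u hx hy hu hyne N.card M'.card Z hZq hZne hqs hcons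
  rw [Fintype.card_coe] at hcore
  rw [hnorm]
  omega
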